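/- arXiv:2112.07506 — 4 statements merged into one kernel-verified Lean document; each statement's English description precedes it below -/
import Mathlib

section
/- Let p ∈ P(k, k) be a projective partition. Then for any partitions q ∈ P(l, l) and r ∈ P(k, l), the number of removed loops satisfies rl(q, rp) = rl(q, rpr*), where rl(a, b) denotes the number of closed loops produced when vertically concatenating a on top of b. -/
attribute [local instance] Classical.propDecidable

namespace Partitions

/-- A partition with upper row indexed by `α` and lower row indexed by `β`,
modeled as an equivalence relation (set partition) on the disjoint union. -/
abbrev Partn (α β : Type) := Setoid (α ⊕ β)

variable {α β γ α' β' : Type}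

/-- Reflection across the horizontal axis: swap upper and lower rows. -/
def reflP (p : Partn α β) : Partn β α := Setoid.comap Sum.swap p

/-- Inclusion of the two-row diagram of the top partition into the three-row diagram. -/
def iTop : α ⊕ β → α ⊕ β ⊕ γ := Sum.map id Sum.inl

/-- Inclusion of the two-row diagram of the bottom partition into the three-row diagram. -/
def iBot (α : Type) {β γ : Type} : β ⊕ γ → α ⊕ β ⊕ γ := Sum.inr

/-- Inclusion of the outer (top and bottom) rows into the three-row diagram. -/
def iOut : α ⊕ γ → α ⊕ β ⊕ γ := Sum.map id Sum.inr

/-- Inclusion of the middle row into the three-row diagram. -/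
def iMid (α : Type) {β : Type} (γ : Type) (b : β) : α ⊕ β ⊕ γ := Sum.inr (Sum.inl b)

/-- The equivalence relation generated on the three-row diagram when stacking
`p` (with rows `α`, `β`) on top of `q` (with rows `β`, `γ`). -/
def glue (q : Partn β γ) (p : Partn α β) : Setoid (α ⊕ β ⊕ γ) :=
  Relation.EqvGen.setoid (fun x y =>
    (∃ u v, p.r u v ∧ x = iTop u ∧ y = iTop v) ∨
    (∃ u v, q.r u v ∧ x = iBot α u ∧ y = iBot α v))

/-- Vertical concatenation: `p` on top, `q` below; restrict the glued relation to
the outer rows. -/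
def vcomp (q : Partn β γ) (p : Partn α β) : Partn α γ :=
  Setoid.comap iOut (glue q p)

/-- A projective partition: `p² = p = p*`. -/
def Projective (p : Partn α α) : Prop := vcomp p p = p ∧ reflP p = p

/-- A middle point lying on a removed loop: it is connected to no outer point. -/
def IsLoopPt (q : Partn β γ) (p : Partn α β) (b : β) : Prop :=
  ∀ x : α ⊕ γ, ¬ (glue q p).r (iMid α γ b) (iOut x)

/-- The number of removed loops `rl(q, p)` in the vertical concatenation. -/
noncomputable def rl (q : Partn β γ) (p : Partn α β) : ℕ :=
  Nat.card (Quotient (Setoid.comap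
    (fun b : {b : β // IsLoopPt q p b} => iMid α γ b.1) (glue q p)))

/-- The disjoint union of two set partitions. -/
def sumSetoid (p : Setoid α) (q : Setoid β) : Setoid (α ⊕ β) :=
  ⟨Sum.LiftRel p.r q.r, by
    refine ⟨?_, ?_, ?_⟩
    · rintro (a | b)
      · exact .inl (p.iseqv.refl a)
      · exact .inr (q.iseqv.refl b)
    · rintro _ _ (h | h)
      · exact .inl (p.iseqv.symm h)
      · exact .inr (q.iseqv.symm h)
    · rintro _ _ _ (h | h) h₂
      · cases h₂ with
        | inl h₂ => exact .inl (p.iseqv.trans h h₂)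
      · cases h₂ with
        | inr h₂ => exact .inr (q.iseqv.trans h h₂)⟩

/-- Horizontal concatenation `p ⊙ q` of partitions. -/
def hconcat (p : Partn α β) (q : Partn α' β') : Partn (α ⊕ α') (β ⊕ β') :=
  Setoid.comap (Equiv.sumSumSumComm α α' β β') (sumSetoid p q)

/-- Number of through-blocks `t(p)`: blocks containing both an upper and a lower point. -/
noncomputable def throughCount (p : Partn α β) : ℕ :=
  Nat.card {c : Quotient p //
    (∃ a : α, Quotient.mk p (Sum.inl a) = c) ∧ ∃ b : β, Quotient.mk p (Sum.inr b) = c}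

/-- `δ_p(i, j)`: `1` if the indices are constant on each block of `p`, `0` otherwise. -/
noncomputable def deltaP (N : ℕ) (p : Partn α β) (f : α → Fin N) (g : β → Fin N) : ℂ :=
  if ∀ x y, p.r x y → Sum.elim f g x = Sum.elim f g y then 1 else 0

/-- The matrix of the linear map `T_p : (ℂ^N)^{⊗α} → (ℂ^N)^{⊗β}` in the canonical bases. -/
noncomputable def partMatrix (N : ℕ) (p : Partn α β) :
    Matrix (β → Fin N) (α → Fin N) ℂ :=
  fun g f => deltaP N p f g

/-- The identity partition `|` in `P(1,1)` (one block joining the two points). -/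
def identP : Partn (Fin 1) (Fin 1) := ⊤

section AuxProof

variable {δ : Type}

lemma eqvGen_le {gen : α → α → Prop} {S : Setoid α} (h : ∀ x y, gen x y → S.r x y) :
    ∀ {x y : α}, (Relation.EqvGen.setoid gen).r x y → S.r x y := by
  intro x y hxy
  have hxy' : Relation.EqvGen gen x y := hxy
  clear hxy
  induction hxy' with
  | rel a b h' => exact h a b h'
  | refl a => exact S.iseqv.refl a
  | symm a b _ ih => exact S.iseqv.symm ih
  | trans a b c _ _ ih1 ih2 => exact S.iseqv.trans ih1 ih2

lemma glue_top {q : Partn β γ} {p : Partn α β} {u v : α ⊕ β} (h : p.r u v) :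
    (glue q p).r (iTop u) (iTop v) :=
  Relation.EqvGen.rel _ _ (Or.inl ⟨u, v, h, rfl, rfl⟩)

lemma glue_bot {q : Partn β γ} {p : Partn α β} {u v : β ⊕ γ} (h : q.r u v) :
    (glue q p).r (iBot α u) (iBot α v) :=
  Relation.EqvGen.rel _ _ (Or.inr ⟨u, v, h, rfl, rfl⟩)

lemma glue_le {q : Partn β γ} {p : Partn α β} {S : Setoid (α ⊕ β ⊕ γ)}
    (hT : ∀ u v, p.r u v → S.r (iTop u) (iTop v))
    (hB : ∀ u v, q.r u v → S.r (iBot α u) (iBot α v)) :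
    ∀ {x y}, (glue q p).r x y → S.r x y := by
  intro x y hxy
  refine eqvGen_le ?_ hxy
  rintro x y (⟨u, v, h, rfl, rfl⟩ | ⟨u, v, h, rfl, rfl⟩)
  · exact hT u v h
  · exact hB u v h

/-! ### The four-row diagram and associativity of `vcomp` -/

def jAB : α ⊕ β → α ⊕ β ⊕ γ ⊕ δ := Sum.map id Sum.inl
def jBC : β ⊕ γ → α ⊕ β ⊕ γ ⊕ δ := fun u => Sum.inr (Sum.map id Sum.inl u)
def jCD : γ ⊕ δ → α ⊕ β ⊕ γ ⊕ δ := fun u => Sum.inr (Sum.inr u)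
def eAD : α ⊕ δ → α ⊕ β ⊕ γ ⊕ δ := Sum.map id (fun d => Sum.inr (Sum.inr d))

def glue4 (A : Partn α β) (B : Partn β γ) (C : Partn γ δ) : Setoid (α ⊕ β ⊕ γ ⊕ δ) :=
  Relation.EqvGen.setoid (fun x y =>
    (∃ u v, A.r u v ∧ x = jAB u ∧ y = jAB v) ∨
    (∃ u v, B.r u v ∧ x = jBC u ∧ y = jBC v) ∨
    (∃ u v, C.r u v ∧ x = jCD u ∧ y = jCD v))

variable {A : Partn α β} {B : Partn β γ} {C : Partn γ δ}

lemma glue4_A {u v : α ⊕ β} (h : A.r u v) : (glue4 A B C).r (jAB u) (jAB v) :=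
  Relation.EqvGen.rel _ _ (Or.inl ⟨u, v, h, rfl, rfl⟩)

lemma glue4_B {u v : β ⊕ γ} (h : B.r u v) : (glue4 A B C).r (jBC u) (jBC v) :=
  Relation.EqvGen.rel _ _ (Or.inr (Or.inl ⟨u, v, h, rfl, rfl⟩))

lemma glue4_C {u v : γ ⊕ δ} (h : C.r u v) : (glue4 A B C).r (jCD u) (jCD v) :=
  Relation.EqvGen.rel _ _ (Or.inr (Or.inr ⟨u, v, h, rfl, rfl⟩))

/-- Embedding of the three-row diagram `α ⊕ β ⊕ γ` into the four-row diagram. -/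
def w3 : α ⊕ β ⊕ γ → α ⊕ β ⊕ γ ⊕ δ
  | .inl a => .inl a
  | .inr (.inl b) => .inr (.inl b)
  | .inr (.inr g) => .inr (.inr (.inl g))

/-- Embedding of the three-row diagram `α ⊕ γ ⊕ δ` into the four-row diagram. -/
def e3 : α ⊕ γ ⊕ δ → α ⊕ β ⊕ γ ⊕ δ
  | .inl a => .inl a
  | .inr (.inl g) => .inr (.inr (.inl g))
  | .inr (.inr d) => .inr (.inr (.inr d))

/-- Embedding of the three-row diagram `α ⊕ β ⊕ δ` into the four-row diagram. -/
def e3' : α ⊕ β ⊕ δ → α ⊕ β ⊕ γ ⊕ δ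
  | .inl a => .inl a
  | .inr (.inl b) => .inr (.inl b)
  | .inr (.inr d) => .inr (.inr (.inr d))

/-- Embedding of the three-row diagram `β ⊕ γ ⊕ δ` into the four-row diagram. -/
def w3' : β ⊕ γ ⊕ δ → α ⊕ β ⊕ γ ⊕ δ := Sum.inr

lemma glueBA_le_glue4 : ∀ {x y}, (glue B A).r x y →
    (glue4 A B C).r (w3 x) (w3 y) := by
  intro x y h
  refine glue_le (S := Setoid.comap w3 (glue4 A B C)) ?_ ?_ h
  · intro u v h
    have e : ∀ u : α ⊕ β, w3 (γ := γ) (δ := δ) (iTop u) = jAB u := by rintro (a | b) <;> rfl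
    show (glue4 A B C).r (w3 (iTop u)) (w3 (iTop v))
    rw [e, e]; exact glue4_A h
  · intro u v h
    have e : ∀ u : β ⊕ γ, w3 (α := α) (δ := δ) (iBot α u) = jBC u := by rintro (b | g) <;> rfl
    show (glue4 A B C).r (w3 (iBot α u)) (w3 (iBot α v))
    rw [e, e]; exact glue4_B h

lemma glueCB_le_glue4 : ∀ {x y}, (glue C B).r x y →
    (glue4 A B C).r (w3' x) (w3' y) := by
  intro x y h
  refine glue_le (S := Setoid.comap (w3' (α := α)) (glue4 A B C)) ?_ ?_ h
  · intro u v h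
    have e : ∀ u : β ⊕ γ, w3' (α := α) (iTop (γ := δ) u) = jBC u := by rintro (b | g) <;> rfl
    show (glue4 A B C).r (w3' (iTop u)) (w3' (iTop v))
    rw [e, e]; exact glue4_B h
  · intro u v h
    have e : ∀ u : γ ⊕ δ, w3' (α := α) (β := β) (iBot β u) = jCD u := by rintro (g | d) <;> rfl
    show (glue4 A B C).r (w3' (iBot β u)) (w3' (iBot β v))
    rw [e, e]; exact glue4_C h

/-- Auxiliary "attachment class" function for the contraction of the second row. -/
def F1 (A : Partn α β) (B : Partn β γ) (C : Partn γ δ) (x : α ⊕ β ⊕ γ) : Set (α ⊕ γ ⊕ δ) :=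
  {z | ∃ w : α ⊕ γ, (glue B A).r x (iOut w) ∧ (glue C (vcomp B A)).r (iTop w) z}

def f1 (A : Partn α β) (B : Partn β γ) (C : Partn γ δ) : α ⊕ β ⊕ γ ⊕ δ → Set (α ⊕ γ ⊕ δ)
  | .inl a => F1 A B C (.inl a)
  | .inr (.inl b) => F1 A B C (.inr (.inl b))
  | .inr (.inr (.inl g)) => F1 A B C (.inr (.inr g))
  | .inr (.inr (.inr d)) => {z | (glue C (vcomp B A)).r (.inr (.inr d)) z}

lemma F1_congr {x y : α ⊕ β ⊕ γ} (h : (glue B A).r x y) :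
    F1 A B C x = F1 A B C y := by
  ext z
  constructor
  · rintro ⟨w, h1, h2⟩; exact ⟨w, (glue B A).iseqv.trans ((glue B A).iseqv.symm h) h1, h2⟩
  · rintro ⟨w, h1, h2⟩; exact ⟨w, (glue B A).iseqv.trans h h1, h2⟩

lemma F1_out (u : α ⊕ γ) :
    F1 A B C (iOut u) = {z | (glue C (vcomp B A)).r (iTop u) z} := by
  ext z
  constructor
  · rintro ⟨w, h1, h2⟩
    have h1' : (vcomp B A).r u w := h1
    exact (glue C (vcomp B A)).iseqv.trans (glue_top h1') h2
  · intro h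
    exact ⟨u, (glue B A).iseqv.refl _, h⟩

lemma f1_jAB (u : α ⊕ β) : f1 A B C (jAB u) = F1 A B C (iTop u) := by
  rcases u with a | b <;> rfl

lemma f1_jBC (u : β ⊕ γ) : f1 A B C (jBC u) = F1 A B C (iBot α u) := by
  rcases u with b | g <;> rfl

lemma f1_jCD (u : γ ⊕ δ) :
    f1 A B C (jCD u) = {z | (glue C (vcomp B A)).r (iBot α u) z} := by
  rcases u with g | d
  · show F1 A B C (.inr (.inr g)) = _
    have e : (Sum.inr (Sum.inr g) : α ⊕ β ⊕ γ) = iOut (.inr g) := rfl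
    rw [e, F1_out]; rfl
  · rfl

lemma f1_e3 (x : α ⊕ γ ⊕ δ) :
    f1 A B C (e3 x) = {z | (glue C (vcomp B A)).r x z} := by
  rcases x with a | g | d
  · show F1 A B C (.inl a) = _
    have e : (Sum.inl a : α ⊕ β ⊕ γ) = iOut (.inl a) := rfl
    rw [e, F1_out]; rfl
  · show F1 A B C (.inr (.inr g)) = _
    have e : (Sum.inr (Sum.inr g) : α ⊕ β ⊕ γ) = iOut (.inr g) := rfl
    rw [e, F1_out]; rfl
  · rfl

lemma glue4_ker_f1 : ∀ {x y}, (glue4 A B C).r x y → f1 A B C x = f1 A B C y := by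
  intro x y hxy
  refine eqvGen_le (S := Setoid.ker (f1 A B C)) ?_ hxy
  rintro x y (⟨u, v, h, rfl, rfl⟩ | ⟨u, v, h, rfl, rfl⟩ | ⟨u, v, h, rfl, rfl⟩)
  · show f1 A B C _ = f1 A B C _
    rw [f1_jAB, f1_jAB]; exact F1_congr (glue_top h)
  · show f1 A B C _ = f1 A B C _
    rw [f1_jBC, f1_jBC]; exact F1_congr (glue_bot h)
  · show f1 A B C _ = f1 A B C _
    rw [f1_jCD, f1_jCD]
    have hbot : (glue C (vcomp B A)).r (iBot α u) (iBot α v) := glue_bot h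
    ext z
    constructor
    · intro hz; exact (glue C (vcomp B A)).iseqv.trans ((glue C (vcomp B A)).iseqv.symm hbot) hz
    · intro hz; exact (glue C (vcomp B A)).iseqv.trans hbot hz

lemma glueT_eq : glue C (vcomp B A) = Setoid.comap e3 (glue4 A B C) := by
  apply Setoid.ext
  intro x y
  constructor
  · intro h
    refine glue_le (S := Setoid.comap e3 (glue4 A B C)) ?_ ?_ h
    · intro u v h
      have h' : (glue B A).r (iOut u) (iOut v) := h
      have e : ∀ u : α ⊕ γ, e3 (β := β) (δ := δ) (iTop u) = w3 (iOut u) := by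
        rintro (a | g) <;> rfl
      show (glue4 A B C).r (e3 (iTop u)) (e3 (iTop v))
      rw [e, e]; exact glueBA_le_glue4 h'
    · intro u v h
      have e : ∀ u : γ ⊕ δ, e3 (β := β) (iBot α u) = jCD u := by rintro (g | d) <;> rfl
      show (glue4 A B C).r (e3 (iBot α u)) (e3 (iBot α v))
      rw [e, e]; exact glue4_C h
  · intro h
    have h2 := glue4_ker_f1 (A := A) (B := B) (C := C) h
    rw [f1_e3, f1_e3] at h2
    have hy : y ∈ {z | (glue C (vcomp B A)).r x z} := by
      rw [h2]; exact (glue C (vcomp B A)).iseqv.refl y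
    exact hy

/-- Auxiliary "attachment class" function for the contraction of the third row. -/
def F2 (A : Partn α β) (B : Partn β γ) (C : Partn γ δ) (x : β ⊕ γ ⊕ δ) : Set (α ⊕ β ⊕ δ) :=
  {z | ∃ w : β ⊕ δ, (glue C B).r x (iOut w) ∧ (glue (vcomp C B) A).r (iBot α w) z}

def f2 (A : Partn α β) (B : Partn β γ) (C : Partn γ δ) : α ⊕ β ⊕ γ ⊕ δ → Set (α ⊕ β ⊕ δ)
  | .inl a => {z | (glue (vcomp C B) A).r (.inl a) z}
  | .inr x => F2 A B C x

lemma F2_congr {x y : β ⊕ γ ⊕ δ} (h : (glue C B).r x y) :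
    F2 A B C x = F2 A B C y := by
  ext z
  constructor
  · rintro ⟨w, h1, h2⟩; exact ⟨w, (glue C B).iseqv.trans ((glue C B).iseqv.symm h) h1, h2⟩
  · rintro ⟨w, h1, h2⟩; exact ⟨w, (glue C B).iseqv.trans h h1, h2⟩

lemma F2_out (u : β ⊕ δ) :
    F2 A B C (iOut u) = {z | (glue (vcomp C B) A).r (iBot α u) z} := by
  ext z
  constructor
  · rintro ⟨w, h1, h2⟩
    have h1' : (vcomp C B).r u w := h1
    exact (glue (vcomp C B) A).iseqv.trans (glue_bot h1') h2
  · intro h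
    exact ⟨u, (glue C B).iseqv.refl _, h⟩

lemma f2_jAB (u : α ⊕ β) :
    f2 A B C (jAB u) = {z | (glue (vcomp C B) A).r (iTop u) z} := by
  rcases u with a | b
  · rfl
  · show F2 A B C (.inl b) = _
    have e : (Sum.inl b : β ⊕ γ ⊕ δ) = iOut (.inl b) := rfl
    rw [e, F2_out]; rfl

lemma f2_jBC (u : β ⊕ γ) : f2 A B C (jBC u) = F2 A B C (iTop u) := by
  rcases u with b | g <;> rfl

lemma f2_jCD (u : γ ⊕ δ) : f2 A B C (jCD u) = F2 A B C (iBot β u) := by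
  rcases u with g | d <;> rfl

lemma f2_e3' (x : α ⊕ β ⊕ δ) :
    f2 A B C (e3' x) = {z | (glue (vcomp C B) A).r x z} := by
  rcases x with a | b | d
  · rfl
  · show F2 A B C (.inl b) = _
    have e : (Sum.inl b : β ⊕ γ ⊕ δ) = iOut (.inl b) := rfl
    rw [e, F2_out]; rfl
  · show F2 A B C (.inr (.inr d)) = _
    have e : (Sum.inr (Sum.inr d) : β ⊕ γ ⊕ δ) = iOut (.inr d) := rfl
    rw [e, F2_out]; rfl

lemma glue4_ker_f2 : ∀ {x y}, (glue4 A B C).r x y → f2 A B C x = f2 A B C y := by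
  intro x y hxy
  refine eqvGen_le (S := Setoid.ker (f2 A B C)) ?_ hxy
  rintro x y (⟨u, v, h, rfl, rfl⟩ | ⟨u, v, h, rfl, rfl⟩ | ⟨u, v, h, rfl, rfl⟩)
  · show f2 A B C _ = f2 A B C _
    rw [f2_jAB, f2_jAB]
    have htop : (glue (vcomp C B) A).r (iTop u) (iTop v) := glue_top h
    ext z
    constructor
    · intro hz; exact (glue (vcomp C B) A).iseqv.trans ((glue (vcomp C B) A).iseqv.symm htop) hz
    · intro hz; exact (glue (vcomp C B) A).iseqv.trans htop hz
  · show f2 A B C _ = f2 A B C _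
    rw [f2_jBC, f2_jBC]; exact F2_congr (glue_top h)
  · show f2 A B C _ = f2 A B C _
    rw [f2_jCD, f2_jCD]; exact F2_congr (glue_bot h)

lemma glueT'_eq : glue (vcomp C B) A = Setoid.comap e3' (glue4 A B C) := by
  apply Setoid.ext
  intro x y
  constructor
  · intro h
    refine glue_le (S := Setoid.comap e3' (glue4 A B C)) ?_ ?_ h
    · intro u v h
      have e : ∀ u : α ⊕ β, e3' (γ := γ) (iTop (γ := δ) u) = jAB u := by rintro (a | b) <;> rfl
      show (glue4 A B C).r (e3' (iTop u)) (e3' (iTop v))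
      rw [e, e]; exact glue4_A h
    · intro u v h
      have h' : (glue C B).r (iOut u) (iOut v) := h
      have e : ∀ u : β ⊕ δ, e3' (γ := γ) (iBot α u) = w3' (iOut u) := by
        rintro (b | d) <;> rfl
      show (glue4 A B C).r (e3' (iBot α u)) (e3' (iBot α v))
      rw [e, e]; exact glueCB_le_glue4 h'
  · intro h
    have h2 := glue4_ker_f2 (A := A) (B := B) (C := C) h
    rw [f2_e3', f2_e3'] at h2
    have hy : y ∈ {z | (glue (vcomp C B) A).r x z} := by
      rw [h2]; exact (glue (vcomp C B) A).iseqv.refl y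
    exact hy

lemma vcomp_assoc (A : Partn α β) (B : Partn β γ) (C : Partn γ δ) :
    vcomp C (vcomp B A) = vcomp (vcomp C B) A := by
  apply Setoid.ext
  intro x y
  show (glue C (vcomp B A)).r (iOut x) (iOut y) ↔ (glue (vcomp C B) A).r (iOut x) (iOut y)
  rw [glueT_eq, glueT'_eq]
  have e : ∀ x : α ⊕ δ, e3 (β := β) (iOut x) = e3' (γ := γ) (iOut x) := by
    rintro (a | d) <;> rfl
  show (glue4 A B C).r (e3 (iOut x)) (e3 (iOut y)) ↔
      (glue4 A B C).r (e3' (iOut x)) (e3' (iOut y))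
  rw [e, e]

/-! ### Reflection is an anti-homomorphism for `vcomp` -/

def rev3 : γ ⊕ β ⊕ α → α ⊕ β ⊕ γ
  | .inl c => .inr (.inr c)
  | .inr (.inl b) => .inr (.inl b)
  | .inr (.inr a) => .inl a

def rev3' : α ⊕ β ⊕ γ → γ ⊕ β ⊕ α
  | .inl a => .inr (.inr a)
  | .inr (.inl b) => .inr (.inl b)
  | .inr (.inr c) => .inl c

lemma glue_rev (p : Partn α β) (q : Partn β γ) {x y : γ ⊕ β ⊕ α} :
    (glue (reflP p) (reflP q)).r x y ↔ (glue q p).r (rev3 x) (rev3 y) := by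
  constructor
  · intro h
    refine glue_le (S := Setoid.comap rev3 (glue q p)) ?_ ?_ h
    · intro u v h
      have h' : q.r (Sum.swap u) (Sum.swap v) := h
      have e : ∀ u : γ ⊕ β, rev3 (iTop (γ := α) u) = iBot α (Sum.swap u) := by
        rintro (c | b) <;> rfl
      show (glue q p).r (rev3 (iTop u)) (rev3 (iTop v))
      rw [e, e]; exact glue_bot h'
    · intro u v h
      have h' : p.r (Sum.swap u) (Sum.swap v) := h
      have e : ∀ u : β ⊕ α, rev3 (iBot γ u) = iTop (Sum.swap u) := by
        rintro (b | a) <;> rfl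
      show (glue q p).r (rev3 (iBot γ u)) (rev3 (iBot γ v))
      rw [e, e]; exact glue_top h'
  · intro h
    have h2 : (glue (reflP p) (reflP q)).r (rev3' (rev3 x)) (rev3' (rev3 y)) := by
      refine glue_le (S := Setoid.comap rev3' (glue (reflP p) (reflP q))) ?_ ?_ h
      · intro u v h
        have h' : (reflP p).r (Sum.swap u) (Sum.swap v) := by
          show p.r (Sum.swap (Sum.swap u)) (Sum.swap (Sum.swap v))
          rw [Sum.swap_swap, Sum.swap_swap]; exact h
        have e : ∀ u : α ⊕ β, rev3' (iTop (γ := γ) u) = iBot γ (Sum.swap u) := by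
          rintro (a | b) <;> rfl
        show (glue (reflP p) (reflP q)).r (rev3' (iTop u)) (rev3' (iTop v))
        rw [e, e]; exact glue_bot h'
      · intro u v h
        have h' : (reflP q).r (Sum.swap u) (Sum.swap v) := by
          show q.r (Sum.swap (Sum.swap u)) (Sum.swap (Sum.swap v))
          rw [Sum.swap_swap, Sum.swap_swap]; exact h
        have e : ∀ u : β ⊕ γ, rev3' (iBot α u) = iTop (Sum.swap u) := by
          rintro (b | c) <;> rfl
        show (glue (reflP p) (reflP q)).r (rev3' (iBot α u)) (rev3' (iBot α v))
        rw [e, e]; exact glue_top h'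
    have e : ∀ x : γ ⊕ β ⊕ α, rev3' (rev3 x) = x := by rintro (c | b | a) <;> rfl
    rwa [e, e] at h2

lemma reflP_vcomp (p : Partn α β) (q : Partn β γ) :
    reflP (vcomp q p) = vcomp (reflP p) (reflP q) := by
  apply Setoid.ext
  intro x y
  show (glue q p).r (iOut (Sum.swap x)) (iOut (Sum.swap y)) ↔
      (glue (reflP p) (reflP q)).r (iOut x) (iOut y)
  rw [glue_rev]
  have e : ∀ x : γ ⊕ α, rev3 (iOut (β := β) x) = iOut (Sum.swap x) := by rintro (c | a) <;> rfl
  rw [e, e]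

/-! ### The number of removed loops only depends on the bottom data -/

section LoopData

variable {κ κ' l l' : Type}

def DGen (X : Partn κ l) (q : Partn l l') : (l ⊕ l') → (l ⊕ l') → Prop := fun x y =>
  (∃ u v, X.r (.inr u) (.inr v) ∧ x = Sum.inl u ∧ y = Sum.inl v) ∨ q.r x y

/-- The part of the glued relation that only involves the two lower rows. -/
def Dset (X : Partn κ l) (q : Partn l l') : Setoid (l ⊕ l') :=
  Relation.EqvGen.setoid (DGen X q)

variable {X : Partn κ l} {q : Partn l l'}

lemma Dset_rel_inl {u v : l} (h : X.r (.inr u) (.inr v)) :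
    (Dset X q).r (.inl u) (.inl v) :=
  Relation.EqvGen.rel _ _ (Or.inl ⟨u, v, h, rfl, rfl⟩)

lemma Dset_rel_q {x y : l ⊕ l'} (h : q.r x y) : (Dset X q).r x y :=
  Relation.EqvGen.rel _ _ (Or.inr h)

def fA (X : Partn κ l) (q : Partn l l') : κ ⊕ l ⊕ l' → Set (l ⊕ l')
  | .inl t => {z | ∃ m, X.r (.inl t) (.inr m) ∧ (Dset X q).r (.inl m) z}
  | .inr w => {z | (Dset X q).r w z}

lemma fA_top_bot {t : κ} {b : l} (h : X.r (.inl t) (.inr b)) :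
    fA X q (.inl t) = fA X q (.inr (.inl b)) := by
  ext z
  constructor
  · rintro ⟨m, h1, h2⟩
    exact (Dset X q).iseqv.trans (Dset_rel_inl (X.iseqv.trans (X.iseqv.symm h) h1)) h2
  · intro hz
    exact ⟨b, h, hz⟩

lemma glue_ker_fA : ∀ {x y}, (glue q X).r x y → fA X q x = fA X q y := by
  intro x y hxy
  refine glue_le (S := Setoid.ker (fA X q)) ?_ ?_ hxy
  · rintro (t | b) (t' | b') h
    · show fA X q (.inl t) = fA X q (.inl t')
      ext z
      constructor
      · rintro ⟨m, h1, h2⟩; exact ⟨m, X.iseqv.trans (X.iseqv.symm h) h1, h2⟩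
      · rintro ⟨m, h1, h2⟩; exact ⟨m, X.iseqv.trans h h1, h2⟩
    · exact fA_top_bot h
    · exact (fA_top_bot (X.iseqv.symm h)).symm
    · show fA X q (.inr (.inl b)) = fA X q (.inr (.inl b'))
      ext z
      constructor
      · intro hz; exact (Dset X q).iseqv.trans ((Dset X q).iseqv.symm (Dset_rel_inl h)) hz
      · intro hz; exact (Dset X q).iseqv.trans (Dset_rel_inl h) hz
  · intro u v h
    show fA X q (.inr u) = fA X q (.inr v)
    ext z
    constructor
    · intro hz; exact (Dset X q).iseqv.trans ((Dset X q).iseqv.symm (Dset_rel_q h)) hz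
    · intro hz; exact (Dset X q).iseqv.trans (Dset_rel_q h) hz

lemma glue_inr_iff {w w' : l ⊕ l'} :
    (glue q X).r (.inr w) (.inr w') ↔ (Dset X q).r w w' := by
  constructor
  · intro h
    have h2 := glue_ker_fA h
    have : w' ∈ fA X q (.inr w) := by
      rw [h2]; exact (Dset X q).iseqv.refl w'
    exact this
  · intro h
    refine eqvGen_le (S := Setoid.comap Sum.inr (glue q X)) ?_ h
    rintro x y (⟨u, v, h', rfl, rfl⟩ | h')
    · exact glue_top (q := q) (p := X) (u := .inr u) (v := .inr v) h'
    · exact glue_bot (q := q) (p := X) h'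

lemma glue_inl_inr_iff {t : κ} {w : l ⊕ l'} :
    (glue q X).r (.inl t) (.inr w) ↔
      ∃ m, X.r (.inl t) (.inr m) ∧ (Dset X q).r (.inl m) w := by
  constructor
  · intro h
    have h2 := glue_ker_fA h
    have : w ∈ fA X q (.inl t) := by
      rw [h2]; exact (Dset X q).iseqv.refl w
    exact this
  · rintro ⟨m, h1, h2⟩
    exact (glue q X).iseqv.trans
      (glue_top (q := q) (p := X) (u := .inl t) (v := .inr m) h1)
      (glue_inr_iff.mpr h2)

lemma isLoopPt_iff (q : Partn l l') (X : Partn κ l) (b : l) :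
    IsLoopPt q X b ↔
      (¬ ∃ m, (∃ t, X.r (.inr m) (.inl t)) ∧ (Dset X q).r (.inl m) (.inl b)) ∧
      (¬ ∃ c : l', (Dset X q).r (.inl b) (.inr c)) := by
  constructor
  · intro h
    constructor
    · rintro ⟨m, ⟨t, hX⟩, hD⟩
      refine h (Sum.inl t) ?_
      show (glue q X).r (.inr (.inl b)) (.inl t)
      exact (glue q X).iseqv.symm (glue_inl_inr_iff.mpr ⟨m, X.iseqv.symm hX, hD⟩)
    · rintro ⟨c, hD⟩
      refine h (Sum.inr c) ?_
      show (glue q X).r (.inr (.inl b)) (.inr (.inr c))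
      exact glue_inr_iff.mpr hD
  · rintro ⟨h1, h2⟩ x hx
    rcases x with t | c
    · have hx' : (glue q X).r (.inl t) (.inr (.inl b)) := (glue q X).iseqv.symm hx
      obtain ⟨m, hX, hD⟩ := glue_inl_inr_iff.mp hx'
      exact h1 ⟨m, ⟨t, X.iseqv.symm hX⟩, hD⟩
    · have hx' : (Dset X q).r (.inl b) (.inr c) := glue_inr_iff.mp hx
      exact h2 ⟨c, hx'⟩

lemma rl_congr (q : Partn l l') (X1 : Partn κ l) (X2 : Partn κ' l)
    (hA : ∀ b b', X1.r (.inr b) (.inr b') ↔ X2.r (.inr b) (.inr b'))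
    (hS : ∀ b, (∃ t, X1.r (.inr b) (.inl t)) ↔ (∃ t, X2.r (.inr b) (.inl t))) :
    rl q X1 = rl q X2 := by
  have hD : Dset X1 q = Dset X2 q := by
    unfold Dset DGen
    congr 1
    funext x y
    apply propext
    constructor <;> rintro (⟨u, v, h, rfl, rfl⟩ | h)
    · exact Or.inl ⟨u, v, (hA u v).mp h, rfl, rfl⟩
    · exact Or.inr h
    · exact Or.inl ⟨u, v, (hA u v).mpr h, rfl, rfl⟩
    · exact Or.inr h
  have hP : ∀ b, IsLoopPt q X1 b ↔ IsLoopPt q X2 b := by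
    intro b
    rw [isLoopPt_iff, isLoopPt_iff, hD]
    constructor <;> rintro ⟨h1, h2⟩ <;> refine ⟨?_, h2⟩
    · rintro ⟨m, ht, hDm⟩; exact h1 ⟨m, (hS m).mpr ht, hDm⟩
    · rintro ⟨m, ht, hDm⟩; exact h1 ⟨m, (hS m).mp ht, hDm⟩
  unfold rl
  apply Nat.card_congr
  refine Quotient.congr (Equiv.subtypeEquivRight hP) ?_
  intro b1 b2
  show (glue q X1).r (.inr (.inl b1.1)) (.inr (.inl b2.1)) ↔
      (glue q X2).r (.inr (.inl b1.1)) (.inr (.inl b2.1))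
  rw [glue_inr_iff, glue_inr_iff, hD]

end LoopData

/-! ### `s` and `s s*` have the same bottom data -/

section BottomData

variable {κ l : Type}

def phiB : l ⊕ κ ⊕ l → κ ⊕ l
  | .inl y => .inr y
  | .inr (.inl m) => .inl m
  | .inr (.inr c) => .inr c

lemma glueSS_le (s : Partn κ l) : ∀ {x y}, (glue s (reflP s)).r x y →
    s.r (phiB x) (phiB y) := by
  intro x y h
  refine glue_le (S := Setoid.comap phiB s) ?_ ?_ h
  · intro u v h
    have h' : s.r (Sum.swap u) (Sum.swap v) := h
    have e : ∀ u : l ⊕ κ, phiB (iTop (γ := l) u) = Sum.swap u := by rintro (y | m) <;> rfl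
    show s.r (phiB (iTop u)) (phiB (iTop v))
    rw [e, e]; exact h'
  · intro u v h
    have e : ∀ u : κ ⊕ l, phiB (iBot l u) = u := by rintro (m | c) <;> rfl
    show s.r (phiB (iBot l u)) (phiB (iBot l v))
    rw [e, e]; exact h

lemma bottom_rel (s : Partn κ l) (b b' : l) :
    (vcomp s (reflP s)).r (.inr b) (.inr b') ↔ s.r (.inr b) (.inr b') := by
  constructor
  · intro h
    have h' : (glue s (reflP s)).r (.inr (.inr b)) (.inr (.inr b')) := h
    exact glueSS_le s h'
  · intro h
    show (glue s (reflP s)).r (.inr (.inr b)) (.inr (.inr b'))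
    exact glue_bot (q := s) (p := reflP s) (u := .inr b) (v := .inr b') h

lemma bottom_top (s : Partn κ l) (b : l) :
    (∃ y : l, (vcomp s (reflP s)).r (.inr b) (.inl y)) ↔
      (∃ m : κ, s.r (.inr b) (.inl m)) := by
  constructor
  · rintro ⟨y, hy⟩
    set g : l ⊕ κ ⊕ l → Prop :=
      fun x => (∃ c, x = Sum.inl c) ∨ ∃ m, s.r (phiB x) (.inl m) with hg
    have hker : ∀ {x y'}, (glue s (reflP s)).r x y' → g x = g y' := by
      intro x y' h
      refine glue_le (S := Setoid.ker g) ?_ ?_ h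
      · intro u v h
        have gtrue : ∀ u : l ⊕ κ, g (iTop (γ := l) u) := by
          rintro (c | m)
          · exact Or.inl ⟨c, rfl⟩
          · exact Or.inr ⟨m, s.iseqv.refl _⟩
        show g (iTop u) = g (iTop v)
        exact propext (iff_of_true (gtrue u) (gtrue v))
      · intro u v h
        show g (iBot l u) = g (iBot l v)
        have e : ∀ u : κ ⊕ l, phiB (iBot l u) = u := by rintro (m | c) <;> rfl
        apply propext
        constructor
        · rintro (⟨c, hc⟩ | ⟨m, hm⟩)
          · exact absurd hc (by simp [iBot])
          · refine Or.inr ⟨m, ?_⟩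
            rw [e] at hm ⊢
            exact s.iseqv.trans (s.iseqv.symm h) hm
        · rintro (⟨c, hc⟩ | ⟨m, hm⟩)
          · exact absurd hc (by simp [iBot])
          · refine Or.inr ⟨m, ?_⟩
            rw [e] at hm ⊢
            exact s.iseqv.trans h hm
    have hy' : (glue s (reflP s)).r (.inr (.inr b)) (.inl y) := hy
    have hgy : g (Sum.inl y) := Or.inl ⟨y, rfl⟩
    have hgb : g (Sum.inr (Sum.inr b)) := by rw [hker hy']; exact hgy
    rcases hgb with ⟨c, hc⟩ | ⟨m, hm⟩
    · exact absurd hc (by simp)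
    · exact ⟨m, hm⟩
  · rintro ⟨m, hm⟩
    refine ⟨b, ?_⟩
    show (glue s (reflP s)).r (.inr (.inr b)) (.inl b)
    have h1 : (glue s (reflP s)).r (.inr (.inr b)) (.inr (.inl m)) :=
      glue_bot (q := s) (p := reflP s) (u := .inr b) (v := .inl m) hm
    have h2 : (glue s (reflP s)).r (.inr (.inl m)) (.inl b) :=
      glue_top (q := s) (p := reflP s) (u := .inr m) (v := .inl b)
        (show s.r (.inl m) (.inr b) from s.iseqv.symm hm)
    exact (glue s (reflP s)).iseqv.trans h1 h2

end BottomData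

end AuxProof

/-- For a projective partition `p ∈ P(k,k)` and any `q ∈ P(l,l)`,
`r ∈ P(k,l)`, one has `rl(q, rp) = rl(q, rpr*)`. -/
theorem rl_vcomp_eq_rl_vcomp_reflP (k l : ℕ) (p : Partn (Fin k) (Fin k))
    (hp : Projective p) (q : Partn (Fin l) (Fin l)) (r : Partn (Fin k) (Fin l)) :
    rl q (vcomp r p) = rl q (vcomp (vcomp r p) (reflP r)) := by
  obtain ⟨hpp, hps⟩ := hp
  have h2 : vcomp (vcomp r p) p = vcomp r p := by
    rw [← vcomp_assoc, hpp]
  have h1 : reflP (vcomp r p) = vcomp p (reflP r) := by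
    rw [reflP_vcomp, hps]
  have key : vcomp (vcomp r p) (reflP r) = vcomp (vcomp r p) (reflP (vcomp r p)) := by
    rw [h1, vcomp_assoc, h2]
  rw [key]
  exact rl_congr q (vcomp r p) (vcomp (vcomp r p) (reflP (vcomp r p)))
    (fun b b' => (bottom_rel (vcomp r p) b b').symm)
    (fun b => (bottom_top (vcomp r p) b).symm)

end Partitions
end

section
/- For any partitions p ∈ P(k, l) and q ∈ P(l, m) and any integer N ≥ 1, the associated linear maps on tensor powers of ℂ^N satisfy T_q ∘ T_p = N^{rl(q, p)} · T_{qp}, where qp is the vertical concatenation of p and q and rl(q, p) is the number of removed loops. -/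
attribute [local instance] Classical.propDecidable

namespace Partitions

variable {α β γ α' β' : Type}

-- AUX
section Aux
variable {N : ℕ} (q : Partn β γ) (p : Partn α β)
variable (f : α → Fin N) (g : β → Fin N) (h : γ → Fin N)

def Valid : Prop :=
  (∀ x y, p.r x y → Sum.elim f g x = Sum.elim f g y) ∧
  (∀ x y, q.r x y → Sum.elim g h x = Sum.elim g h y)

lemma elim_iTop (u : α ⊕ β) :
    Sum.elim f (Sum.elim g h) (iTop (γ := γ) u) = Sum.elim f g u := by cases u <;> rfl
lemma elim_iBot (u : β ⊕ γ) :
    Sum.elim f (Sum.elim g h) (iBot α u) = Sum.elim g h u := by cases u <;> rfl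
lemma elim_iOut (u : α ⊕ γ) :
    Sum.elim f (Sum.elim g h) (iOut (β := β) u) = Sum.elim f h u := by cases u <;> rfl

lemma valid_iff :
    Valid q p f g h ↔ ∀ x y, (glue q p).r x y →
      Sum.elim f (Sum.elim g h) x = Sum.elim f (Sum.elim g h) y := by
  constructor
  · rintro ⟨hp, hq⟩ x y hxy
    induction hxy with
    | rel x y hr =>
      rcases hr with ⟨u, v, huv, rfl, rfl⟩ | ⟨u, v, huv, rfl, rfl⟩
      · rw [elim_iTop, elim_iTop]; exact hp u v huv
      · rw [elim_iBot, elim_iBot]; exact hq u v huv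
    | refl => rfl
    | symm _ _ _ ih => exact ih.symm
    | trans _ _ _ _ _ ih1 ih2 => exact ih1.trans ih2
  · intro H
    refine ⟨fun u v huv => ?_, fun u v huv => ?_⟩
    · rw [← elim_iTop f g h u, ← elim_iTop f g h v]
      exact H _ _ (Relation.EqvGen.rel _ _ (Or.inl ⟨u, v, huv, rfl, rfl⟩))
    · rw [← elim_iBot f g h u, ← elim_iBot f g h v]
      exact H _ _ (Relation.EqvGen.rel _ _ (Or.inr ⟨u, v, huv, rfl, rfl⟩))

abbrev LoopQuot := Quotient (Setoid.comap
    (fun b : {b : β // IsLoopPt q p b} => iMid α γ b.1) (glue q p))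

noncomputable def Vfun (φ : LoopQuot q p → Fin N) : (α ⊕ β ⊕ γ) → Fin N := fun x =>
  if hx : ∃ y : α ⊕ γ, (glue q p).r x (iOut y) then Sum.elim f h hx.choose
  else match x, hx with
    | Sum.inl a, _ => f a
    | Sum.inr (Sum.inl b), hx => φ (Quotient.mk _ ⟨b, fun y hy => hx ⟨y, hy⟩⟩)
    | Sum.inr (Sum.inr c), _ => h c

variable (hδ : ∀ x y, (vcomp q p).r x y → Sum.elim f h x = Sum.elim f h y)

include hδ in
lemma Vfun_out (φ : LoopQuot q p → Fin N) (z : α ⊕ γ) :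
    Vfun q p f h φ (iOut z) = Sum.elim f h z := by
  have hx : ∃ y : α ⊕ γ, (glue q p).r (iOut (β := β) z) (iOut y) := ⟨z, (glue q p).refl _⟩
  rw [Vfun, dif_pos hx]
  exact (hδ z hx.choose hx.choose_spec).symm

include hδ in
lemma Vfun_const (φ : LoopQuot q p → Fin N) {x y : α ⊕ β ⊕ γ} (hxy : (glue q p).r x y) :
    Vfun q p f h φ x = Vfun q p f h φ y := by
  by_cases hx : ∃ z : α ⊕ γ, (glue q p).r x (iOut z)
  · have hy : ∃ z : α ⊕ γ, (glue q p).r y (iOut z) :=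
      ⟨hx.choose, (glue q p).trans ((glue q p).symm hxy) hx.choose_spec⟩
    rw [Vfun, dif_pos hx, Vfun, dif_pos hy]
    exact hδ _ _ ((glue q p).trans ((glue q p).symm hx.choose_spec)
      ((glue q p).trans hxy hy.choose_spec))
  · have hy : ¬ ∃ z : α ⊕ γ, (glue q p).r y (iOut z) := by
      rintro ⟨z, hz⟩; exact hx ⟨z, (glue q p).trans hxy hz⟩
    obtain ⟨b, rfl⟩ : ∃ b : β, x = Sum.inr (Sum.inl b) := by
      rcases x with a | b | c
      · exact absurd ⟨Sum.inl a, (glue q p).refl _⟩ hx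
      · exact ⟨b, rfl⟩
      · exact absurd ⟨Sum.inr c, (glue q p).refl _⟩ hx
    obtain ⟨b', rfl⟩ : ∃ b' : β, y = Sum.inr (Sum.inl b') := by
      rcases y with a | b' | c
      · exact absurd ⟨Sum.inl a, (glue q p).refl _⟩ hy
      · exact ⟨b', rfl⟩
      · exact absurd ⟨Sum.inr c, (glue q p).refl _⟩ hy
    rw [Vfun, dif_neg hx, Vfun, dif_neg hy]
    exact congrArg φ (Quotient.sound hxy)

include hδ in
lemma Vfun_valid (φ : LoopQuot q p → Fin N) :
    Valid q p f (fun b => Vfun q p f h φ (iMid α γ b)) h := by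
  rw [valid_iff]
  have hF : Sum.elim f (Sum.elim (fun b => Vfun q p f h φ (iMid α γ b)) h)
      = Vfun q p f h φ := by
    funext x
    rcases x with a | b | c
    · exact (Vfun_out q p f h hδ φ (Sum.inl a)).symm
    · rfl
    · exact (Vfun_out q p f h hδ φ (Sum.inr c)).symm
  rw [hF]
  exact fun x y hxy => Vfun_const q p f h hδ φ hxy

noncomputable def validEquiv : {g : β → Fin N // Valid q p f g h} ≃ (LoopQuot q p → Fin N) where
  toFun gv := Quotient.lift (fun b => gv.1 b.1)
    (fun b₁ b₂ hb => (valid_iff q p f gv.1 h).1 gv.2 _ _ hb)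
  invFun φ := ⟨fun b => Vfun q p f h φ (iMid α γ b), Vfun_valid q p f h hδ φ⟩
  left_inv gv := by
    apply Subtype.ext
    funext b
    by_cases hx : ∃ z : α ⊕ γ, (glue q p).r (iMid α γ b) (iOut z)
    · show Vfun q p f h _ (iMid α γ b) = gv.1 b
      rw [Vfun, dif_pos hx]
      have := (valid_iff q p f gv.1 h).1 gv.2 _ _ hx.choose_spec
      rw [elim_iOut] at this
      exact this.symm
    · show Vfun q p f h _ (iMid α γ b) = gv.1 b
      rw [Vfun, dif_neg hx]
      rfl
  right_inv φ := by
    funext c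
    induction c using Quotient.ind with
    | _ b =>
      have hx : ¬ ∃ z : α ⊕ γ, (glue q p).r (iMid α γ b.1) (iOut z) := by
        rintro ⟨z, hz⟩; exact b.2 z hz
      show Vfun q p f h φ (iMid α γ b.1) = φ ⟦b⟧
      rw [Vfun, dif_neg hx]
      rfl

include hδ in
lemma card_valid [Finite β] :
    Nat.card {g : β → Fin N // Valid q p f g h} = N ^ rl q p := by
  rw [Nat.card_congr (validEquiv q p f h hδ), Nat.card_fun]
  simp [rl]

lemma valid_imp_delta (hg : Valid q p f g h) :
    ∀ x y, (vcomp q p).r x y → Sum.elim f h x = Sum.elim f h y := by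
  intro x y hxy
  have := (valid_iff q p f g h).1 hg _ _ hxy
  rwa [elim_iOut, elim_iOut] at this

end Aux

/-- `T_q ∘ T_p = N^{rl(q,p)} · T_{qp}` for all partitions
`p ∈ P(k,l)`, `q ∈ P(l,m)` and `N ≥ 1`. -/
theorem partMatrix_mul (k l m N : ℕ) (hN : 1 ≤ N)
    (p : Partn (Fin k) (Fin l)) (q : Partn (Fin l) (Fin m)) :
    partMatrix N q * partMatrix N p = ((N : ℂ) ^ rl q p) • partMatrix N (vcomp q p) := by
  ext j i
  rw [Matrix.mul_apply, Matrix.smul_apply, smul_eq_mul]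
  have key : ∀ g : Fin l → Fin N,
      partMatrix N q j g * partMatrix N p g i = if Valid q p i g j then 1 else 0 := by
    intro g
    show deltaP N q g j * deltaP N p i g = _
    rw [deltaP, deltaP]
    by_cases h1 : ∀ x y, q.r x y → Sum.elim g j x = Sum.elim g j y <;>
      by_cases h2 : ∀ x y, p.r x y → Sum.elim i g x = Sum.elim i g y
    · rw [if_pos h1, if_pos h2, one_mul, if_pos (show Valid q p i g j from ⟨h2, h1⟩)]
    · rw [if_neg h2, mul_zero, if_neg (show ¬ Valid q p i g j from fun hv => h2 hv.1)]
    · rw [if_neg h1, zero_mul, if_neg (show ¬ Valid q p i g j from fun hv => h1 hv.2)]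
    · rw [if_neg h1, zero_mul, if_neg (show ¬ Valid q p i g j from fun hv => h1 hv.2)]
  rw [Finset.sum_congr rfl (fun g _ => key g), Finset.sum_boole]
  by_cases hδ : ∀ x y, (vcomp q p).r x y → Sum.elim i j x = Sum.elim i j y
  · rw [show partMatrix N (vcomp q p) j i = 1 from if_pos hδ, mul_one]
    have hc := card_valid q p i j hδ
    rw [Nat.card_eq_fintype_card, Fintype.card_subtype] at hc
    rw [hc]
    push_cast
    ring
  · rw [show partMatrix N (vcomp q p) j i = 0 from if_neg hδ, mul_zero]
    have : Finset.univ.filter (fun g => Valid q p i g j) = ∅ := by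
      ext g
      simp only [Finset.mem_filter, Finset.mem_univ, true_and, Finset.notMem_empty, iff_false]
      exact fun hg => hδ (valid_imp_delta q p i g j hg)
    rw [this]
    simp

end Partitions
end

section
/- For any partitions p ∈ P(k, l) and q ∈ P(k', l') and any integer N ≥ 1, the linear map associated with the horizontal concatenation p ⊙ q ∈ P(k+k', l+l') equals the tensor product of the linear maps: T_{p⊙q} = T_p ⊗ T_q as a map (ℂ^N)^{⊗(k+k')} → (ℂ^N)^{⊗(l+l')} under the canonical identifications of tensor powers. -/
attribute [local instance] Classical.propDecidable

namespace Partitions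

variable {α β γ α' β' : Type}

open scoped Kronecker

lemma hconcat_cond {N k l k' l' : ℕ} (p : Partn (Fin k) (Fin l)) (q : Partn (Fin k') (Fin l'))
    (f : Fin k ⊕ Fin k' → Fin N) (g : Fin l ⊕ Fin l' → Fin N) :
    (∀ x y, (hconcat p q).r x y → Sum.elim f g x = Sum.elim f g y) ↔
      ((∀ x y, p.r x y →
          Sum.elim (f ∘ Sum.inl) (g ∘ Sum.inl) x = Sum.elim (f ∘ Sum.inl) (g ∘ Sum.inl) y) ∧
       (∀ x y, q.r x y →
          Sum.elim (f ∘ Sum.inr) (g ∘ Sum.inr) x = Sum.elim (f ∘ Sum.inr) (g ∘ Sum.inr) y)) := by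
  have key : ∀ x y, (hconcat p q).r x y ↔
      Sum.LiftRel p.r q.r ((Equiv.sumSumSumComm (Fin k) (Fin k') (Fin l) (Fin l')) x)
        ((Equiv.sumSumSumComm (Fin k) (Fin k') (Fin l) (Fin l')) y) := fun _ _ => Iff.rfl
  constructor
  · intro h
    constructor
    · rintro (a | b) (a' | b') hr
      · exact h (Sum.inl (Sum.inl a)) (Sum.inl (Sum.inl a')) ((key _ _).2 (.inl hr))
      · exact h (Sum.inl (Sum.inl a)) (Sum.inr (Sum.inl b')) ((key _ _).2 (.inl hr))
      · exact h (Sum.inr (Sum.inl b)) (Sum.inl (Sum.inl a')) ((key _ _).2 (.inl hr))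
      · exact h (Sum.inr (Sum.inl b)) (Sum.inr (Sum.inl b')) ((key _ _).2 (.inl hr))
    · rintro (a | b) (a' | b') hr
      · exact h (Sum.inl (Sum.inr a)) (Sum.inl (Sum.inr a')) ((key _ _).2 (.inr hr))
      · exact h (Sum.inl (Sum.inr a)) (Sum.inr (Sum.inr b')) ((key _ _).2 (.inr hr))
      · exact h (Sum.inr (Sum.inr b)) (Sum.inl (Sum.inr a')) ((key _ _).2 (.inr hr))
      · exact h (Sum.inr (Sum.inr b)) (Sum.inr (Sum.inr b')) ((key _ _).2 (.inr hr))
  · rintro ⟨h1, h2⟩ x y hr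
    rw [key] at hr
    rcases x with (a | a') | (b | b') <;> rcases y with (c | c') | (d | d') <;>
      simp only [Equiv.sumSumSumComm, Equiv.coe_fn_mk, Sum.map_inl, Sum.map_inr] at hr <;>
      cases hr <;>
      first
        | exact h1 _ _ (by assumption)
        | exact h2 _ _ (by assumption)

/-- `T_{p⊙q} = T_p ⊗ T_q` for all partitions `p ∈ P(k,l)`,
`q ∈ P(k',l')` and `N ≥ 1`, under the canonical identifications of tensor powers. -/
theorem partMatrix_hconcat (k l k' l' N : ℕ) (hN : 1 ≤ N)
    (p : Partn (Fin k) (Fin l)) (q : Partn (Fin k') (Fin l')) :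
    partMatrix N (hconcat p q) =
      (partMatrix N p ⊗ₖ partMatrix N q).submatrix
        (Equiv.sumArrowEquivProdArrow (Fin l) (Fin l') (Fin N))
        (Equiv.sumArrowEquivProdArrow (Fin k) (Fin k') (Fin N)) := by
  ext g f
  simp only [partMatrix, Matrix.submatrix_apply, Matrix.kroneckerMap_apply,
    Equiv.sumArrowEquivProdArrow, Equiv.coe_fn_mk, deltaP]
  have hc := hconcat_cond p q f g
  split_ifs with h h1 h2
  · norm_num
  · exact absurd (hc.mp h).2 h2
  · exact absurd (hc.mp h).1 h1
  · exact absurd (hc.mp h).1 h1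
  · exact absurd (hc.mpr ⟨by assumption, by assumption⟩) h
  · norm_num
  · norm_num
  · norm_num

end Partitions
end

section
/- Let π : A → B be a surjective morphism of Hopf algebras over a field k, (C, γ) a right B-comodule algebra, and Ind(C) ⊆ C ⊗ A the induced A-comodule algebra (cotensor product). For a finite-dimensional right A-comodule (V, δ_V), let Res(V) be V with the B-comodule structure (id ⊗ π)∘δ_V. Then the map T ↦ (T ⊗ id_A)∘δ_V is a linear isomorphism from Hom_{B-comod}(Res(V), C) (linear maps T : V → C with γ∘T = (T ⊗ id_B)∘δ_{Res(V)}) onto Hom_{A-comod}(V, Ind(C)) (linear maps T' : V → Ind(C) with (id ⊗ Δ_A)∘T' = (T' ⊗ id_A)∘δ_V), with inverse T' ↦ (id_C ⊗ ε_A)∘T'. -/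
open scoped TensorProduct

set_option maxHeartbeats 2000000
set_option synthInstance.maxHeartbeats 400000

noncomputable section

variable (K : Type) [Field K]
variable (A : Type) [Ring A] [HopfAlgebra K A]
variable (B : Type) [Ring B] [HopfAlgebra K B]
variable (C : Type) [Ring C] [Algebra K C]
variable (V : Type) [AddCommGroup V] [Module K V]

/-- The cotensor product `Ind(C) = C □_B A` inside `C ⊗ A`. -/
def IndSub (π : A →ₐ[K] B) (γ : C →ₐ[K] C ⊗[K] B) : Submodule K (C ⊗[K] A) :=
  LinearMap.eqLocus
    ((TensorProduct.assoc K C B A).toLinearMap ∘ₗ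
      TensorProduct.map γ.toLinearMap LinearMap.id)
    (TensorProduct.map LinearMap.id
      (TensorProduct.map π.toLinearMap LinearMap.id ∘ₗ Coalgebra.comul (R := K)))

/-- `T : V → C` is a morphism of `B`-comodules from `Res(V)` to `C`, where `Res(V)`
carries the coaction `(id ⊗ π) ∘ δ_V`. -/
def IsResMor (π : A →ₐ[K] B) (γ : C →ₐ[K] C ⊗[K] B) (δV : V →ₗ[K] V ⊗[K] A)
    (T : V →ₗ[K] C) : Prop :=
  ∀ v : V, γ (T v) =
    (T.rTensor B) ((TensorProduct.map LinearMap.id π.toLinearMap) (δV v))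

/-- `T' : V → C ⊗ A` is a morphism of `A`-comodules into `Ind(C)`
(with coaction `id ⊗ Δ_A`). -/
def IsIndMor (π : A →ₐ[K] B) (γ : C →ₐ[K] C ⊗[K] B) (δV : V →ₗ[K] V ⊗[K] A)
    (T' : V →ₗ[K] C ⊗[K] A) : Prop :=
  (∀ v : V, T' v ∈ IndSub K A B C π γ) ∧
  ∀ v : V, (TensorProduct.map LinearMap.id (Coalgebra.comul (R := K))) (T' v) =
    (TensorProduct.assoc K C A A) ((T'.rTensor A) (δV v))

/-- The Frobenius map `T ↦ (T ⊗ id_A) ∘ δ_V`. -/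
def frobMap (δV : V →ₗ[K] V ⊗[K] A) (T : V →ₗ[K] C) : V →ₗ[K] C ⊗[K] A :=
  T.rTensor A ∘ₗ δV

/-- The inverse Frobenius map `T' ↦ (id_C ⊗ ε_A) ∘ T'`. -/
def frobInv (T' : V →ₗ[K] C ⊗[K] A) : V →ₗ[K] C :=
  (TensorProduct.rid K C).toLinearMap ∘ₗ
    (TensorProduct.map LinearMap.id (Coalgebra.counit (R := K))) ∘ₗ T'

/-- Frobenius-type reciprocity: for a surjective Hopf algebra morphism
`π : A → B`, a right `B`-comodule algebra `(C, γ)` and a finite-dimensional right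
`A`-comodule `(V, δ_V)`, the map `T ↦ (T ⊗ id_A) ∘ δ_V` is a linear isomorphism from
`Hom_{B-comod}(Res(V), C)` onto `Hom_{A-comod}(V, Ind(C))`, with inverse
`T' ↦ (id_C ⊗ ε_A) ∘ T'`. -/
theorem frobenius_reciprocity
    (π : A →ₐ[K] B) (hπsurj : Function.Surjective π)
    (hπcomul : ∀ a : A, Coalgebra.comul (R := K) (π a) =
      TensorProduct.map π.toLinearMap π.toLinearMap (Coalgebra.comul (R := K) a))
    (hπcounit : ∀ a : A, Coalgebra.counit (R := K) (π a) = Coalgebra.counit (R := K) a)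
    (hπantipode : ∀ a : A,
      HopfAlgebra.antipode (R := K) (π a) = π (HopfAlgebra.antipode (R := K) a))
    (γ : C →ₐ[K] C ⊗[K] B)
    (hγcoassoc : ∀ c : C,
      (TensorProduct.assoc K C B B)
          ((TensorProduct.map γ.toLinearMap LinearMap.id) (γ c)) =
        (TensorProduct.map LinearMap.id (Coalgebra.comul (R := K))) (γ c))
    (hγcounit : ∀ c : C,
      (TensorProduct.rid K C)
          ((TensorProduct.map LinearMap.id (Coalgebra.counit (R := K))) (γ c)) = c)
    [FiniteDimensional K V] (δV : V →ₗ[K] V ⊗[K] A)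
    (hδVcoassoc : ∀ v : V,
      (TensorProduct.assoc K V A A) ((δV.rTensor A) (δV v)) =
        (TensorProduct.map LinearMap.id (Coalgebra.comul (R := K))) (δV v))
    (hδVcounit : ∀ v : V,
      (TensorProduct.rid K V)
          ((TensorProduct.map LinearMap.id (Coalgebra.counit (R := K))) (δV v)) = v) :
    (∀ T S : V →ₗ[K] C, frobMap K A C V δV (T + S) =
      frobMap K A C V δV T + frobMap K A C V δV S) ∧
    (∀ (c : K) (T : V →ₗ[K] C), frobMap K A C V δV (c • T) = c • frobMap K A C V δV T) ∧
    (∀ T : V →ₗ[K] C, IsResMor K A B C V π γ δV T →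
      IsIndMor K A B C V π γ δV (frobMap K A C V δV T)) ∧
    (∀ T' : V →ₗ[K] C ⊗[K] A, IsIndMor K A B C V π γ δV T' →
      IsResMor K A B C V π γ δV (frobInv K A C V T')) ∧
    (∀ T : V →ₗ[K] C, IsResMor K A B C V π γ δV T →
      frobInv K A C V (frobMap K A C V δV T) = T) ∧
    (∀ T' : V →ₗ[K] C ⊗[K] A, IsIndMor K A B C V π γ δV T' →
      frobMap K A C V δV (frobInv K A C V T') = T') := by
  classical
  -- abbreviations
  set ε : A →ₗ[K] K := Coalgebra.counit (R := K) with hεdef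
  set Δ : A →ₗ[K] A ⊗[K] A := Coalgebra.comul (R := K) with hΔdef
  -- the "counit on the left factor" map A ⊗ A → A
  set E : A ⊗[K] A →ₗ[K] A :=
    (TensorProduct.lid K A).toLinearMap ∘ₗ LinearMap.rTensor A ε with hEdef
  -- the "counit on the right factor" map B ⊗ A → B
  set E' : B ⊗[K] A →ₗ[K] B :=
    (TensorProduct.rid K B).toLinearMap ∘ₗ LinearMap.lTensor B ε with hE'def
  have hE : ∀ a : A, E (Δ a) = a := by
    intro a
    simp [hEdef, hΔdef, hεdef, Coalgebra.rTensor_counit_comul]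
  -- part 6 first (needed for part 4)
  have h6 : ∀ T' : V →ₗ[K] C ⊗[K] A, IsIndMor K A B C V π γ δV T' →
      frobMap K A C V δV (frobInv K A C V T') = T' := by
    intro T' hT'
    obtain ⟨hmem, hmor⟩ := hT'
    have key0 : ∀ (z : C ⊗[K] A) (a : A),
        (TensorProduct.map LinearMap.id E) ((TensorProduct.assoc K C A A) (z ⊗ₜ[K] a)) =
        ((TensorProduct.rid K C) ((TensorProduct.map LinearMap.id ε) z)) ⊗ₜ[K] a := by
      intro z a
      induction z using TensorProduct.induction_on with
      | zero => simp
      | tmul c a' =>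
        simp [hEdef, TensorProduct.assoc_tmul, TensorProduct.rid_tmul,
          TensorProduct.lid_tmul, TensorProduct.smul_tmul']
      | add x y hx hy =>
        simp only [TensorProduct.add_tmul, map_add, hx, hy]
    have key : ∀ y : V ⊗[K] A,
        (TensorProduct.map LinearMap.id E)
          ((TensorProduct.assoc K C A A) (T'.rTensor A y)) =
        (frobInv K A C V T').rTensor A y := by
      intro y
      induction y using TensorProduct.induction_on with
      | zero => simp
      | tmul w a =>
        simp only [LinearMap.rTensor_tmul, key0]
        simp [frobInv, hεdef]
      | add x y hx hy => simp only [map_add, hx, hy]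
    have lhs : ∀ x : C ⊗[K] A,
        (TensorProduct.map LinearMap.id E)
          ((TensorProduct.map LinearMap.id Δ) x) = x := by
      intro x
      induction x using TensorProduct.induction_on with
      | zero => simp
      | tmul c a => simp [hE]
      | add x y hx hy => simp only [map_add, hx, hy]
    apply LinearMap.ext
    intro v
    have := hmor v
    calc frobMap K A C V δV (frobInv K A C V T') v
        = (frobInv K A C V T').rTensor A (δV v) := rfl
      _ = (TensorProduct.map LinearMap.id E)
            ((TensorProduct.assoc K C A A) (T'.rTensor A (δV v))) := (key (δV v)).symm
      _ = (TensorProduct.map LinearMap.id E)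
            ((TensorProduct.map LinearMap.id Δ) (T' v)) := by rw [← this]
      _ = T' v := lhs (T' v)
  refine ⟨?_, ?_, ?_, ?_, ?_, h6⟩
  · -- additivity
    intro T S
    unfold frobMap
    rw [LinearMap.rTensor_add, LinearMap.add_comp]
  · -- scalar multiplication
    intro c T
    unfold frobMap
    rw [LinearMap.rTensor_smul, LinearMap.smul_comp]
  · -- frobMap sends Res-morphisms to Ind-morphisms
    intro T hT
    have key3a : ∀ (z : V ⊗[K] A) (a : A),
        (TensorProduct.assoc K C B A)
          ((T.rTensor B ((TensorProduct.map LinearMap.id π.toLinearMap) z)) ⊗ₜ[K] a) =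
        (TensorProduct.map T (TensorProduct.map π.toLinearMap LinearMap.id))
          ((TensorProduct.assoc K V A A) (z ⊗ₜ[K] a)) := by
      intro z a
      induction z using TensorProduct.induction_on with
      | zero => simp
      | tmul w b => simp
      | add x y hx hy =>
        simp only [map_add, TensorProduct.add_tmul, hx, hy]
    have hmix : ∀ x : V ⊗[K] A,
        (TensorProduct.map T (TensorProduct.map π.toLinearMap LinearMap.id))
          ((TensorProduct.map LinearMap.id Δ) x) =
        (TensorProduct.map LinearMap.id
          (TensorProduct.map π.toLinearMap LinearMap.id ∘ₗ Δ)) (T.rTensor A x) := by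
      intro x
      induction x using TensorProduct.induction_on with
      | zero => simp
      | tmul w a => simp
      | add x y hx hy => simp only [map_add, hx, hy]
    constructor
    · intro v
      rw [IndSub, LinearMap.mem_eqLocus]
      have hF : frobMap K A C V δV T v = T.rTensor A (δV v) := rfl
      simp only [LinearMap.comp_apply, LinearEquiv.coe_coe, hF]
      have step1 : (TensorProduct.assoc K C B A)
          ((TensorProduct.map γ.toLinearMap LinearMap.id) (T.rTensor A (δV v))) =
          (TensorProduct.map T (TensorProduct.map π.toLinearMap LinearMap.id))
            ((TensorProduct.assoc K V A A) (δV.rTensor A (δV v))) := by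
        have h1 : ∀ y : V ⊗[K] A,
            (TensorProduct.assoc K C B A)
              ((TensorProduct.map γ.toLinearMap LinearMap.id) (T.rTensor A y)) =
            (TensorProduct.map T (TensorProduct.map π.toLinearMap LinearMap.id))
              ((TensorProduct.assoc K V A A) (δV.rTensor A y)) := by
          intro y
          induction y using TensorProduct.induction_on with
          | zero => simp
          | tmul w a =>
            simp only [LinearMap.rTensor_tmul, TensorProduct.map_tmul,
              LinearMap.id_coe, id_eq, AlgHom.toLinearMap_apply]
            rw [hT w]
            exact key3a (δV w) a
          | add x y hx hy => simp only [map_add, hx, hy]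
        exact h1 (δV v)
      rw [step1, hδVcoassoc v]
      exact hmix (δV v)
    · intro v
      have hF : frobMap K A C V δV T v = T.rTensor A (δV v) := rfl
      have hnat : ∀ y : (V ⊗[K] A) ⊗[K] A,
          (TensorProduct.assoc K C A A) ((T.rTensor A).rTensor A y) =
          T.rTensor (A ⊗[K] A) ((TensorProduct.assoc K V A A) y) := by
        intro y
        induction y using TensorProduct.induction_on with
        | zero => simp
        | tmul x a =>
          induction x using TensorProduct.induction_on with
          | zero => simp
          | tmul w a' => simp
          | add x y hx hy => simp only [TensorProduct.add_tmul, map_add, hx, hy]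
        | add x y hx hy => simp only [map_add, hx, hy]
      have hswap : ∀ x : V ⊗[K] A,
          (TensorProduct.map LinearMap.id Δ) (T.rTensor A x) =
          T.rTensor (A ⊗[K] A) ((TensorProduct.map LinearMap.id Δ) x) := by
        intro x
        induction x using TensorProduct.induction_on with
        | zero => simp
        | tmul w a => simp
        | add x y hx hy => simp only [map_add, hx, hy]
      have hrc : (frobMap K A C V δV T).rTensor A (δV v) =
          (T.rTensor A).rTensor A (δV.rTensor A (δV v)) := by
        rw [frobMap, LinearMap.rTensor_comp]
        rfl
      rw [hF, hrc, hnat, hδVcoassoc v, hswap]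
  · -- frobInv sends Ind-morphisms to Res-morphisms
    intro T' hT'
    obtain ⟨hmem, hmor⟩ := hT'
    have hT'eq := h6 T' ⟨hmem, hmor⟩
    intro v
    set T₀ : V →ₗ[K] C := frobInv K A C V T' with hT₀def
    -- right-hand side computation
    have hRHS : T₀.rTensor B ((TensorProduct.map LinearMap.id π.toLinearMap) (δV v)) =
        (TensorProduct.map LinearMap.id π.toLinearMap) (T' v) := by
      have h1 : ∀ z : V ⊗[K] A,
          T₀.rTensor B ((TensorProduct.map LinearMap.id π.toLinearMap) z) =
          (TensorProduct.map LinearMap.id π.toLinearMap) (T₀.rTensor A z) := by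
        intro z
        induction z using TensorProduct.induction_on with
        | zero => simp
        | tmul w a => simp
        | add x y hx hy => simp only [map_add, hx, hy]
      rw [h1 (δV v)]
      have : T₀.rTensor A (δV v) = frobMap K A C V δV T₀ v := rfl
      rw [this, hT₀def, hT'eq]
    -- left-hand side computation
    have hE' : ∀ a : A,
        E' ((TensorProduct.map π.toLinearMap LinearMap.id) (Δ a)) = π a := by
      intro a
      have h1 : ∀ x : A ⊗[K] A,
          E' ((TensorProduct.map π.toLinearMap LinearMap.id) x) =
          π ((TensorProduct.rid K A) (LinearMap.lTensor A ε x)) := by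
        intro x
        induction x using TensorProduct.induction_on with
        | zero => simp
        | tmul a₁ a₂ =>
          simp [hE'def, TensorProduct.rid_tmul, map_smul]
        | add x y hx hy => simp only [map_add, hx, hy]
      rw [h1 (Δ a)]
      have h2 : LinearMap.lTensor A ε (Δ a) = a ⊗ₜ[K] (1 : K) := by
        simp [hεdef, hΔdef, Coalgebra.lTensor_counit_comul]
      rw [h2]
      simp
    have leftLemma : ∀ z : C ⊗[K] A,
        (TensorProduct.map LinearMap.id E')
          ((TensorProduct.assoc K C B A)
            ((TensorProduct.map γ.toLinearMap LinearMap.id) z)) =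
        γ ((TensorProduct.rid K C) ((TensorProduct.map LinearMap.id ε) z)) := by
      intro z
      induction z using TensorProduct.induction_on with
      | zero => simp
      | tmul c a =>
        have inner : ∀ w : C ⊗[K] B,
            (TensorProduct.map LinearMap.id E')
              ((TensorProduct.assoc K C B A) (w ⊗ₜ[K] a)) = ε a • w := by
          intro w
          induction w using TensorProduct.induction_on with
          | zero => simp
          | tmul c₁ b =>
            simp [hE'def, TensorProduct.assoc_tmul, TensorProduct.rid_tmul,
              TensorProduct.tmul_smul]
          | add x y hx hy =>
            simp only [TensorProduct.add_tmul, map_add, hx, hy, smul_add]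
        simp only [TensorProduct.map_tmul, LinearMap.id_coe, id_eq]
        rw [inner]
        simp [TensorProduct.rid_tmul, map_smul]
      | add x y hx hy => simp only [map_add, hx, hy]
    have rightLemma : ∀ z : C ⊗[K] A,
        (TensorProduct.map LinearMap.id E')
          ((TensorProduct.map LinearMap.id
            (TensorProduct.map π.toLinearMap LinearMap.id ∘ₗ Δ)) z) =
        (TensorProduct.map LinearMap.id π.toLinearMap) z := by
      intro z
      induction z using TensorProduct.induction_on with
      | zero => simp
      | tmul c a => simp [hE' a]
      | add x y hx hy => simp only [map_add, hx, hy]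
    have hmemv := hmem v
    rw [IndSub, LinearMap.mem_eqLocus] at hmemv
    simp only [LinearMap.comp_apply, LinearEquiv.coe_coe] at hmemv
    have hL : γ (T₀ v) =
        (TensorProduct.map LinearMap.id E')
          ((TensorProduct.assoc K C B A)
            ((TensorProduct.map γ.toLinearMap LinearMap.id) (T' v))) := by
      rw [leftLemma (T' v)]
      rfl
    rw [hL, hmemv, rightLemma (T' v), hRHS]
  · -- frobInv ∘ frobMap = id
    intro T hT
    apply LinearMap.ext
    intro v
    have h1 : ∀ y : V ⊗[K] A,
        (TensorProduct.rid K C) ((TensorProduct.map LinearMap.id ε) (T.rTensor A y)) =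
        T ((TensorProduct.rid K V) ((TensorProduct.map LinearMap.id ε) y)) := by
      intro y
      induction y using TensorProduct.induction_on with
      | zero => simp
      | tmul w a => simp [TensorProduct.rid_tmul, map_smul]
      | add x y hx hy => simp only [map_add, hx, hy]
    have : frobInv K A C V (frobMap K A C V δV T) v =
        (TensorProduct.rid K C)
          ((TensorProduct.map LinearMap.id ε) (T.rTensor A (δV v))) := rfl
    rw [this, h1 (δV v), hεdef, hδVcounit v]


end
end
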